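/- Let x ∈ (0, 1/2) be irrational with by-excess digits b_1, b_2, …. Then b_1 ≥ 3 (so t_1 = 1 and n_1 = 1), and the regular continued fraction partial quotients of x are (b_1 − 1, n_2, b_{t_2} − 2, n_3, b_{t_3} − 2, …); that is, a_1(x) = b_1 − 1 and, for all j ≥ 1, a_{2j}(x) = n_{j+1} and a_{2j+1}(x) = b_{t_{j+1}} − 2. -/

import Mathlib

open Set Filter

/-- The Gauss map `G(t) = 1/t − ⌊1/t⌋`. -/
noncomputable def gmap (t : ℝ) : ℝ := 1 / t - ⌊1 / t⌋

/-- `ra y n = a_{n+1}(y) = ⌊1/G^n(y)⌋`, the regular continued fraction partial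
quotients of `y`. -/
noncomputable def ra (y : ℝ) (n : ℕ) : ℤ := ⌊1 / (gmap^[n] y)⌋

/-- The by-excess continued fraction map `A_0(x) = ⌊1/x + 1⌋ − 1/x`. -/
noncomputable def exm (x : ℝ) : ℝ := ⌊1 / x + 1⌋ - 1 / x

/-- `bEx x n = b_{n+1} = ⌊1/A_0^n(x) + 1⌋`, the by-excess digits of `x`. -/
noncomputable def bEx (x : ℝ) (n : ℕ) : ℤ := ⌊1 / (exm^[n] x) + 1⌋

/-- Given the increasing enumeration `t` (0-indexed: `t j` is the paper's `t_{j+1}`),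
`nOf t j` is the paper's `n_{j+1}`: `n_1 = t_1` and `n_{j+1} = t_{j+1} − t_j`. -/
def nOf (t : ℕ → ℕ) : ℕ → ℕ
  | 0 => t 0
  | j + 1 => t (j + 1) - t j


open Function
section Aux

lemma irr_one_div' {z : ℝ} (hz : Irrational z) : Irrational (1 / z) := by
  rw [one_div]; exact irrational_inv_iff.2 hz

lemma one_lt_one_div'' {z : ℝ} (h0 : 0 < z) (h1 : z < 1) : 1 < 1 / z := by
  rw [lt_div_iff₀ h0]; linarith

lemma floor_one_div_pos' {z : ℝ} (h0 : 0 < z) (h1 : z < 1) : 1 ≤ ⌊1/z⌋ :=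
  Int.le_floor.2 (by push_cast; linarith [one_lt_one_div'' h0 h1])

lemma exm_eq' (y : ℝ) : exm y = 1 - gmap y := by
  unfold exm gmap
  rw [show (1:ℝ)/y + 1 = 1/y + (1:ℤ) by push_cast; ring, Int.floor_add_intCast]
  push_cast; ring

lemma gmap_mem' {z : ℝ} (hz : Irrational z) (h0 : 0 < z) (h1 : z < 1) :
    Irrational (gmap z) ∧ 0 < gmap z ∧ gmap z < 1 := by
  have h1d : Irrational (1/z) := irr_one_div' hz
  have hirr : Irrational (gmap z) := h1d.sub_intCast _
  have hfr : gmap z = Int.fract (1/z) := rfl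
  have hnn : 0 ≤ gmap z := by rw [hfr]; exact Int.fract_nonneg _
  refine ⟨hirr, ?_, by rw [hfr]; exact Int.fract_lt_one _⟩
  rcases lt_or_eq_of_le hnn with h | h
  · exact h
  · exact absurd h.symm (by simpa using hirr.ne_int 0)

lemma gmap_orbit' {x : ℝ} (hirr : Irrational x) (h0 : 0 < x) (h1 : x < 1) (n : ℕ) :
    Irrational (gmap^[n] x) ∧ 0 < gmap^[n] x ∧ gmap^[n] x < 1 := by
  induction n with
  | zero => exact ⟨hirr, h0, h1⟩
  | succ n ih =>
    rw [Function.iterate_succ_apply']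
    exact gmap_mem' ih.1 ih.2.1 ih.2.2

lemma block' : ∀ a : ℕ, ∀ z : ℝ, Irrational z → 0 < z → z < 1 → ⌊1/z⌋ = a + 1 →
    (∀ k < a, ⌊1/(exm^[k] (1-z)) + 1⌋ = 2) ∧
    ⌊1/(exm^[a] (1-z)) + 1⌋ = ⌊1/(gmap z)⌋ + 2 ∧
    exm^[a+1] (1-z) = 1 - gmap (gmap z) := by
  intro a
  induction a with
  | zero =>
    intro z hz h0 h1 hfl
    have h1z : (1:ℝ) < 1/z := by rw [lt_div_iff₀ h0]; linarith
    have h2z : 1/z < 2 := by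
      have := Int.lt_floor_add_one (1/z)
      rw [hfl] at this; push_cast at this; linarith
    have hzne : z ≠ 0 := ne_of_gt h0
    have hg : gmap z = 1/z - 1 := by
      unfold gmap; rw [hfl]; push_cast; ring
    have hg0 : 0 < gmap z := by rw [hg]; linarith
    have hg1 : gmap z < 1 := by rw [hg]; linarith
    have hgne : gmap z ≠ 0 := ne_of_gt hg0
    have h1mz : (0:ℝ) < 1 - z := by linarith
    have hkey : 1/(1-z) = 1/(gmap z) + 1 := by
      rw [hg]; field_simp; ring
    have hflg : ⌊1/(gmap z)⌋ + 2 = ⌊1/(1-z) + 1⌋ := by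
      rw [hkey, show 1/(gmap z) + 1 + 1 = 1/(gmap z) + (2:ℤ) by push_cast; ring,
        Int.floor_add_intCast]
    refine ⟨fun k hk => absurd hk (Nat.not_lt_zero k), hflg.symm, ?_⟩
    rw [iterate_one, exm_eq']
    have : gmap (1-z) = gmap (gmap z) := by
      rw [show gmap (1-z) = 1/(1-z) - ⌊1/(1-z)⌋ from rfl,
        show gmap (gmap z) = 1/(gmap z) - ⌊1/(gmap z)⌋ from rfl,
        hkey, show 1/(gmap z) + 1 = 1/(gmap z) + (1:ℤ) by push_cast; ring,
        Int.floor_add_intCast]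
      push_cast; ring
    rw [this]
  | succ a ih =>
    intro z hz h0 h1 hfl
    have hzne : z ≠ 0 := ne_of_gt h0
    have hle : ((a:ℝ) + 2) ≤ 1/z := by
      have := Int.floor_le (1/z); rw [hfl] at this; push_cast at this; linarith
    have h2lt : (2:ℝ) < 1/z := by
      rcases lt_or_eq_of_le (by linarith : (2:ℝ) ≤ 1/z) with h | h
      · exact h
      · exact absurd h.symm (by simpa using (irr_one_div' hz).ne_int 2)
    have hz2 : z < 1/2 := by
      rw [lt_div_iff₀ h0] at h2lt; linarith
    have h1mz : (0:ℝ) < 1 - z := by linarith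
    set z' := z / (1 - z) with hz'def
    have hz'inv : 1/z' = 1/z - 1 := by
      rw [hz'def, one_div_div]; field_simp
    have hz'irr : Irrational z' := by
      have : Irrational (1/z') := by
        rw [hz'inv]
        simpa using (irr_one_div' hz).sub_intCast 1
      rw [one_div] at this
      exact irrational_inv_iff.1 (by simpa using this)
    have hz'0 : 0 < z' := div_pos h0 h1mz
    have hz'1 : z' < 1 := by rw [hz'def, div_lt_one h1mz]; linarith
    have hz'fl : ⌊1/z'⌋ = (a:ℤ) + 1 := by
      rw [hz'inv, show (1:ℝ)/z - 1 = 1/z - (1:ℤ) by push_cast; ring,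
        Int.floor_sub_intCast, hfl]
      push_cast; ring
    have hgz' : gmap z' = gmap z := by
      rw [show gmap z' = 1/z' - ⌊1/z'⌋ from rfl, show gmap z = 1/z - ⌊1/z⌋ from rfl,
        hz'inv, show (1:ℝ)/z - 1 = 1/z - (1:ℤ) by push_cast; ring, Int.floor_sub_intCast]
      push_cast; ring
    have hfl1mz : ⌊1/(1-z)⌋ = 1 := by
      apply Int.floor_eq_iff.2
      constructor
      · push_cast; rw [le_div_iff₀ h1mz]; linarith
      · push_cast; rw [div_lt_iff₀ h1mz]; linarith
    have hstep : exm (1 - z) = 1 - z' := by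
      rw [exm_eq']
      have : gmap (1-z) = z' := by
        unfold gmap; rw [hfl1mz, hz'def]; push_cast; field_simp; ring
      rw [this]
    obtain ⟨ih1, ih2, ih3⟩ := ih z' hz'irr hz'0 hz'1 hz'fl
    refine ⟨?_, ?_, ?_⟩
    · intro k hk
      cases k with
      | zero =>
        simp only [iterate_zero, id]
        rw [show 1/(1-z) + 1 = (1/(1-z)) + (1:ℤ) by push_cast; ring, Int.floor_add_intCast,
          hfl1mz]
        norm_num
      | succ k =>
        rw [iterate_succ_apply, hstep]
        exact ih1 k (by omega)
    · rw [iterate_succ_apply, hstep, ih2, hgz']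
    · rw [show a + 1 + 1 = (a + 1) + 1 from rfl, iterate_succ_apply, hstep, ih3, hgz']

noncomputable def sSeq (x : ℝ) : ℕ → ℕ
  | 0 => 1
  | j + 1 => sSeq x j + (ra x (2 * j + 1)).toNat

section
variable {x : ℝ} (hirr : Irrational x) (h0 : 0 < x) (h2 : x < 1/2)
include hirr h0 h2

lemma ra_pos' (n : ℕ) : 1 ≤ ra x n := by
  have h := gmap_orbit' hirr h0 (by linarith) n
  exact floor_one_div_pos' h.2.1 h.2.2

lemma main_inv' (j : ℕ) : exm^[sSeq x j] x = 1 - gmap^[2*j+1] x ∧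
    (∀ k : ℕ, (k:ℤ) + 1 < ra x (2*j+1) → bEx x (sSeq x j + k) = 2) ∧
    bEx x (sSeq x (j+1) - 1) = ra x (2*j+2) + 2 ∧
    sSeq x (j+1) = sSeq x j + (ra x (2*j+1)).toNat := by
  have horb := gmap_orbit' hirr h0 (by linarith : x < 1)
  have key : ∀ j : ℕ, exm^[sSeq x j] x = 1 - gmap^[2*j+1] x := by
    intro j
    induction j with
    | zero =>
      show exm^[1] x = 1 - gmap^[2*0+1] x
      rw [iterate_one, exm_eq']
      norm_num
    | succ j ih =>
      set z := gmap^[2*j+1] x with hzdef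
      have hz := horb (2*j+1)
      obtain ⟨a, hafl⟩ : ∃ a : ℕ, ⌊1/z⌋ = (a:ℤ) + 1 := by
        have := ra_pos' hirr h0 h2 (2*j+1)
        rw [ra, ← hzdef] at this
        exact ⟨(⌊1/z⌋ - 1).toNat, by omega⟩
      have hra : ra x (2*j+1) = (a:ℤ) + 1 := by rw [ra, ← hzdef]; exact hafl
      have hb := block' a z hz.1 hz.2.1 hz.2.2 hafl
      have hs : sSeq x (j+1) = (a+1) + sSeq x j := by
        show sSeq x j + (ra x (2*j+1)).toNat = _
        rw [hra]; omega
      rw [hs, iterate_add_apply, ih, hb.2.2]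
      have h21 : 2*(j+1)+1 = 2 + (2*j+1) := by ring
      rw [h21, iterate_add_apply]
      rfl
  have hz := horb (2*j+1)
  set z := gmap^[2*j+1] x with hzdef
  obtain ⟨a, hafl⟩ : ∃ a : ℕ, ⌊1/z⌋ = (a:ℤ) + 1 := by
    have := ra_pos' hirr h0 h2 (2*j+1)
    rw [ra, ← hzdef] at this
    exact ⟨(⌊1/z⌋ - 1).toNat, by omega⟩
  have hra : ra x (2*j+1) = (a:ℤ) + 1 := by rw [ra, ← hzdef]; exact hafl
  have hb := block' a z hz.1 hz.2.1 hz.2.2 hafl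
  have hs : sSeq x (j+1) = sSeq x j + (a+1) := by
    show sSeq x j + (ra x (2*j+1)).toNat = _
    rw [hra]; omega
  refine ⟨key j, ?_, ?_, rfl⟩
  · intro k hk
    have hka : k < a := by
      rw [hra] at hk
      exact_mod_cast (by linarith : (k:ℤ) < a)
    rw [bEx, show sSeq x j + k = k + sSeq x j by ring, iterate_add_apply, key j]
    exact hb.1 k hka
  · have hend : sSeq x (j+1) - 1 = a + sSeq x j := by omega
    rw [bEx, hend, iterate_add_apply, key j, hb.2.1]
    have : ra x (2*j+2) = ⌊1/(gmap z)⌋ := by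
      rw [ra, show 2*j+2 = 1 + (2*j+1) by ring, iterate_add_apply, ← hzdef, iterate_one]
    rw [this]

end

section
variable {x : ℝ} (hirr : Irrational x) (h0 : 0 < x) (h2 : x < 1/2)
include hirr h0 h2

lemma sSeq_lb' (j : ℕ) : j + 1 ≤ sSeq x j := by
  induction j with
  | zero => exact le_refl 1
  | succ j ih =>
    have := ra_pos' hirr h0 h2 (2*j+1)
    show j + 1 + 1 ≤ sSeq x j + (ra x (2*j+1)).toNat
    omega

lemma sSeq_mono' : StrictMono (sSeq x) := by
  apply strictMono_nat_of_lt_succ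
  intro j
  have := ra_pos' hirr h0 h2 (2*j+1)
  show sSeq x j < sSeq x j + (ra x (2*j+1)).toNat
  omega

lemma bEx0' : bEx x 0 = ra x 0 + 1 ∧ 3 ≤ bEx x 0 := by
  have hfl : bEx x 0 = ⌊1/x⌋ + 1 := by
    rw [bEx, iterate_zero, id_eq,
      show (1:ℝ)/x + 1 = 1/x + (1:ℤ) by push_cast; ring, Int.floor_add_intCast]
  have hra : ra x 0 = ⌊1/x⌋ := by rw [ra, iterate_zero, id_eq]
  have h2le : (2:ℤ) ≤ ⌊1/x⌋ := by
    apply Int.le_floor.2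
    push_cast
    rw [le_div_iff₀ h0]; linarith
  exact ⟨by rw [hfl, hra], by omega⟩

lemma bEx_ge3_iff' (n : ℕ) : 3 ≤ bEx x n ↔ ∃ j, sSeq x j = n + 1 := by
  constructor
  · intro h3
    rcases Nat.eq_zero_or_pos n with rfl | hn
    · exact ⟨0, rfl⟩
    set P : ℕ → Prop := fun j => sSeq x j ≤ n with hP
    have hdec : DecidablePred P := fun j => Nat.decLe _ _
    set j := Nat.findGreatest P n with hj
    have hjle : P j := Nat.findGreatest_spec (P := P) (Nat.zero_le n) (show P 0 from hn)
    rw [hP] at hjle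
    have hjsucc : n < sSeq x (j+1) := by
      by_cases hc : j + 1 ≤ n
      · have hng : ¬ P (j+1) :=
          Nat.findGreatest_is_greatest (P := P) (by omega) hc
        rw [hP] at hng
        omega
      · have := sSeq_lb' hirr h0 h2 (j+1)
        omega
    have hstep := (main_inv' hirr h0 h2 j).2.2.2
    set k := n - sSeq x j with hk
    have hkra : (k:ℤ) + 1 ≤ ra x (2*j+1) := by
      have hnn : 0 ≤ ra x (2*j+1) := le_trans (by norm_num) (ra_pos' hirr h0 h2 _)
      omega
    rcases lt_or_eq_of_le hkra with hlt | heq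
    · exfalso
      have := (main_inv' hirr h0 h2 j).2.1 k hlt
      rw [show sSeq x j + k = n by omega] at this
      omega
    · refine ⟨j + 1, ?_⟩
      have hnn : 0 ≤ ra x (2*j+1) := le_trans (by norm_num) (ra_pos' hirr h0 h2 _)
      omega
  · rintro ⟨j, hj⟩
    cases j with
    | zero =>
      have : n = 0 := by
        have : sSeq x 0 = 1 := rfl
        omega
      subst this
      exact (bEx0' hirr h0 h2).2
    | succ j =>
      have hend := (main_inv' hirr h0 h2 j).2.2.1
      have h1 : 1 ≤ sSeq x (j+1) := sSeq_lb' hirr h0 h2 (j+1) |>.trans' (by omega)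
      rw [show n = sSeq x (j+1) - 1 by omega, hend]
      have := ra_pos' hirr h0 h2 (2*j+2)
      omega

end

end Aux

/-- Proposition 2.9: let `x ∈ (0,1/2)` be irrational with by-excess digits
`b_1, b_2, …`, and let `t_1 < t_2 < ⋯` enumerate `{n ≥ 1 : b_n ≥ 3}` (here `t j` is
the paper's `t_{j+1}`). Then `b_1 ≥ 3` (so `t_1 = 1` and `n_1 = 1`) and the regular
continued fraction of `x` is `(b_1 − 1, n_2, b_{t_2} − 2, n_3, b_{t_3} − 2, …)`, i.e.
`a_1(x) = b_1 − 1` and, for all `j ≥ 1`, `a_{2j}(x) = n_{j+1}` and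
`a_{2j+1}(x) = b_{t_{j+1}} − 2`. -/
theorem cf_via_excess_small (x : ℝ) (hirr : Irrational x)
    (hx : x ∈ Set.Ioo (0 : ℝ) (1 / 2)) (t : ℕ → ℕ)
    (ht1 : ∀ j, 1 ≤ t j) (hmono : StrictMono t)
    (hmem : ∀ j, 3 ≤ bEx x (t j - 1))
    (hall : ∀ n : ℕ, 3 ≤ bEx x n → ∃ j, t j = n + 1) :
    3 ≤ bEx x 0 ∧ t 0 = 1 ∧ ra x 0 = bEx x 0 - 1 ∧
      ∀ j : ℕ, ra x (2 * j + 1) = (nOf t (j + 1) : ℤ) ∧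
        ra x (2 * j + 2) = bEx x (t (j + 1) - 1) - 2 := by
  obtain ⟨h0, h2⟩ := hx
  have hts : t = sSeq x := by
    refine (hmono.range_inj (sSeq_mono' hirr h0 h2)).1 ?_
    apply Set.eq_of_subset_of_subset
    · rintro _ ⟨j, rfl⟩
      obtain ⟨k, hk⟩ := (bEx_ge3_iff' hirr h0 h2 (t j - 1)).1 (hmem j)
      have := ht1 j
      exact ⟨k, by omega⟩
    · rintro _ ⟨j, rfl⟩
      have h3 : 3 ≤ bEx x (sSeq x j - 1) := by
        rw [bEx_ge3_iff' hirr h0 h2]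
        have := sSeq_lb' hirr h0 h2 j
        exact ⟨j, by omega⟩
      obtain ⟨k, hk⟩ := hall _ h3
      have := sSeq_lb' hirr h0 h2 j
      exact ⟨k, by omega⟩
  subst hts
  refine ⟨(bEx0' hirr h0 h2).2, rfl, by have := (bEx0' hirr h0 h2).1; omega, fun j => ?_⟩
  have hm := main_inv' hirr h0 h2 j
  constructor
  · have hstep := hm.2.2.2
    have hpos := ra_pos' hirr h0 h2 (2*j+1)
    have : nOf (sSeq x) (j+1) = sSeq x (j+1) - sSeq x j := rfl
    rw [this]
    omega
  · have := hm.2.2.1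
    omega
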